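/- Let 𝓗 be the Hilbert space of Dirichlet series f(s) = Σ_{n≥1} a_n n^{−s} with ‖f‖² = Σ_{n≥1} |a_n|² < ∞ (each such f defines a holomorphic function on the half-plane Re s > 1/2). Let φ : ℂ_{1/2} → ℂ_{1/2} be a map such that the composition operator C_φ(f) = f∘φ maps 𝓗 boundedly into itself; by the Gordon–Hedenmalm theorem such φ has the form φ(s) = c₀ s + ψ(s), where c₀ is a non-negative integer and ψ is a Dirichlet series. Then C_φ is not hypercyclic on 𝓗: no f ∈ 𝓗 has dense orbit {C_φⁿ f : n ≥ 1}. -/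

import Mathlib

open Filter Topology Set

/-- The Hilbert space `𝓗` of square-summable Dirichlet series, realized as the `ℓ²` space
of their coefficient sequences (with `a_n` indexed so that `a n` is the coefficient of
`(n+1)^{-s}`). -/
noncomputable abbrev DirichletH : Type := lp (fun _ : ℕ => ℂ) 2

/-- The holomorphic function on the half-plane `Re s > 1/2` associated with an element of
`𝓗`: `f(s) = ∑_{n ≥ 1} a_n n^{-s}`. -/
noncomputable def dirichletFun (a : DirichletH) (s : ℂ) : ℂ :=
  ∑' n : ℕ, a n * ((n : ℂ) + 1) ^ (-s)

section Auxiliary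

open Complex

local notation "⟪" x ", " y "⟫" => @inner ℂ _ _ x y


lemma nterm_norm (n : ℕ) (s : ℂ) : ‖((n:ℂ)+1) ^ (-s)‖ = ((n:ℝ)+1) ^ (-s.re) := by
  have h : ((n:ℂ)+1) = ((((n:ℝ)+1) : ℝ) : ℂ) := by push_cast; ring
  rw [h, Complex.norm_cpow_eq_rpow_re_of_pos (by positivity)]
  simp [Complex.neg_re]

lemma summable_rpow {x : ℝ} (hx : 1 < x) : Summable (fun n : ℕ => ((n:ℝ)+1) ^ (-x)) := by
  have h := (summable_nat_add_iff (f := fun n : ℕ => (n:ℝ) ^ (-x)) 1).2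
    (Real.summable_nat_rpow.2 (by linarith))
  refine h.congr fun n => ?_
  push_cast
  ring_nf

lemma summable_norm_mul (a : DirichletH) {x : ℝ} (hx : 1/2 < x) :
    Summable (fun n : ℕ => ‖a n‖ * ((n:ℝ)+1) ^ (-x)) := by
  have h1 : Summable (fun n : ℕ => ‖a n‖ ^ 2) := by
    have := (lp.memℓp a).summable (p := 2) (by norm_num)
    refine this.congr fun n => ?_
    norm_num
  have h2 : Summable (fun n : ℕ => (((n:ℝ)+1) ^ (-x)) ^ 2) := by
    have : Summable (fun n : ℕ => ((n:ℝ)+1) ^ (-(2*x))) := summable_rpow (by linarith)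
    refine this.congr fun n => ?_
    rw [← Real.rpow_natCast (((n:ℝ)+1) ^ (-x)) 2, ← Real.rpow_mul (by positivity)]
    norm_num; ring_nf
  refine Summable.of_nonneg_of_le (fun n => by positivity) (fun n => ?_) (h1.add h2)
  have h3 : (0:ℝ) ≤ ((n:ℝ)+1) ^ (-x) := by positivity
  nlinarith [sq_nonneg (‖a n‖ - ((n:ℝ)+1) ^ (-x)), norm_nonneg (a n)]

lemma summable_aterm (a : DirichletH) {s : ℂ} (hs : 1/2 < s.re) :
    Summable (fun n : ℕ => a n * ((n:ℂ)+1) ^ (-s)) := by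
  refine Summable.of_norm ?_
  refine (summable_norm_mul a hs).congr fun n => ?_
  rw [norm_mul, nterm_norm]

noncomputable def kfun (s : ℂ) : ∀ _ : ℕ, ℂ := fun n => starRingEnd ℂ (((n:ℂ)+1) ^ (-s))

lemma kmem {s : ℂ} (hs : 1/2 < s.re) : Memℓp (kfun s) 2 := by
  refine memℓp_gen ?_
  have : Summable (fun n : ℕ => ((n:ℝ)+1) ^ (-(2*s.re))) := summable_rpow (by linarith)
  refine this.congr fun n => ?_
  have : ‖kfun s n‖ = ((n:ℝ)+1) ^ (-s.re) := by
    rw [kfun, RCLike.norm_conj, nterm_norm]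
  rw [this, ← Real.rpow_mul (by positivity)]
  norm_num; ring_nf

noncomputable def kvec {s : ℂ} (hs : 1/2 < s.re) : DirichletH := ⟨kfun s, kmem hs⟩

lemma kvec_apply {s : ℂ} (hs : 1/2 < s.re) (n : ℕ) :
    (kvec hs) n = starRingEnd ℂ (((n:ℂ)+1) ^ (-s)) := rfl

lemma dirichletFun_eq_inner (a : DirichletH) {s : ℂ} (hs : 1/2 < s.re) :
    dirichletFun a s = ⟪kvec hs, a⟫ := by
  rw [lp.inner_eq_tsum, dirichletFun]
  refine tsum_congr fun n => ?_
  rw [RCLike.inner_apply, kvec_apply hs, Complex.conj_conj, mul_comm]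

lemma summable_shift2 : Summable (fun n : ℕ => ((n:ℝ)+2) ^ (-(2:ℝ))) := by
  have h := (summable_nat_add_iff (f := fun n : ℕ => ((n:ℝ)+1) ^ (-(2:ℝ))) 1).2
    (summable_rpow (by norm_num))
  refine h.congr fun n => ?_
  push_cast; ring_nf

lemma dirichlet_sub_head_bound (a : DirichletH) {v : ℂ} (hv : 2 ≤ v.re) :
    dist (dirichletFun a v) (a 0) ≤
      (‖a‖ * (4 * ∑' n : ℕ, ((n:ℝ)+2) ^ (-(2:ℝ)))) * (2:ℝ) ^ (-v.re) := by
  have hs : (1:ℝ)/2 < v.re := by linarith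
  have hsum := summable_aterm a hs
  have h0 : dirichletFun a v = a 0 + ∑' n : ℕ, a (n+1) * (((n+1:ℕ):ℂ)+1) ^ (-v) := by
    rw [dirichletFun, hsum.tsum_eq_zero_add]
    norm_num
  rw [h0, dist_eq_norm]
  simp only [add_sub_cancel_left]
  have hb : ∀ n : ℕ, ‖a (n+1) * (((n+1:ℕ):ℂ)+1) ^ (-v)‖ ≤
      (‖a‖ * (4 * (2:ℝ)^(-v.re))) * ((n:ℝ)+2) ^ (-(2:ℝ)) := by
    intro n
    rw [norm_mul, nterm_norm]
    have h1 : ‖a (n+1)‖ ≤ ‖a‖ := lp.norm_apply_le_norm (by norm_num) a (n+1)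
    have h2 : (((n+1:ℕ):ℝ)+1) ^ (-v.re) ≤ ((n:ℝ)+2) ^ (-(2:ℝ)) * (4 * (2:ℝ)^(-v.re)) := by
      have hcast : ((n+1:ℕ):ℝ)+1 = (n:ℝ)+2 := by push_cast; ring
      rw [hcast]
      have hsplit : ((n:ℝ)+2) ^ (-v.re) = ((n:ℝ)+2) ^ (-(2:ℝ)) * ((n:ℝ)+2) ^ (2 - v.re) := by
        rw [← Real.rpow_add (by positivity)]; ring_nf
      rw [hsplit]
      have h3 : ((n:ℝ)+2) ^ (2 - v.re) ≤ (2:ℝ) ^ (2 - v.re) := by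
        rw [← div_le_one (by positivity), ← Real.div_rpow (by positivity) (by norm_num)]
        exact Real.rpow_le_one_of_one_le_of_nonpos (by nlinarith [Nat.cast_nonneg (α := ℝ) n]) (by linarith)
      have h4 : (2:ℝ) ^ (2 - v.re) = 4 * (2:ℝ)^(-v.re) := by
        rw [show (2:ℝ) - v.re = 2 + (-v.re) by ring, Real.rpow_add (by norm_num)]
        norm_num
      have h5 : (0:ℝ) ≤ ((n:ℝ)+2) ^ (-(2:ℝ)) := by positivity
      nlinarith [h5]
    calc ‖a (n+1)‖ * (((n+1:ℕ):ℝ)+1) ^ (-v.re)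
        ≤ ‖a‖ * (((n:ℝ)+2) ^ (-(2:ℝ)) * (4 * (2:ℝ)^(-v.re))) := by
          refine mul_le_mul h1 h2 (by positivity) (norm_nonneg _)
      _ = (‖a‖ * (4 * (2:ℝ)^(-v.re))) * ((n:ℝ)+2) ^ (-(2:ℝ)) := by ring
  have hsumb : Summable (fun n : ℕ => (‖a‖ * (4 * (2:ℝ)^(-v.re))) * ((n:ℝ)+2) ^ (-(2:ℝ))) :=
    summable_shift2.mul_left _
  have hnorm : Summable (fun n : ℕ => ‖a (n+1) * (((n+1:ℕ):ℂ)+1) ^ (-v)‖) :=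
    Summable.of_nonneg_of_le (fun n => norm_nonneg _) hb hsumb
  calc ‖∑' n : ℕ, a (n+1) * (((n+1:ℕ):ℂ)+1) ^ (-v)‖
      ≤ ∑' n : ℕ, (‖a‖ * (4 * (2:ℝ)^(-v.re))) * ((n:ℝ)+2) ^ (-(2:ℝ)) :=
        tsum_of_norm_bounded hsumb.hasSum hb
    _ = (‖a‖ * (4 * ∑' n : ℕ, ((n:ℝ)+2) ^ (-(2:ℝ)))) * (2:ℝ) ^ (-v.re) := by
        rw [tsum_mul_left]; ring

lemma tendsto_dirichletFun_of_re_atTop (a : DirichletH) {α : Type*} {l : Filter α} {w : α → ℂ}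
    (hw : Tendsto (fun t => (w t).re) l atTop) :
    Tendsto (fun t => dirichletFun a (w t)) l (𝓝 ((a : ∀ _ : ℕ, ℂ) 0)) := by
  rw [tendsto_iff_dist_tendsto_zero]
  set M : ℝ := ‖a‖ * (4 * ∑' n : ℕ, ((n:ℝ)+2) ^ (-(2:ℝ))) with hM
  have hbound : ∀ᶠ t in l, dist (dirichletFun a (w t)) ((a : ∀ _ : ℕ, ℂ) 0) ≤ M * (2:ℝ) ^ (-(w t).re) := by
    filter_upwards [hw.eventually_ge_atTop 2] with t ht
    exact dirichlet_sub_head_bound a ht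
  have hlim : Tendsto (fun t => M * (2:ℝ) ^ (-(w t).re)) l (𝓝 0) := by
    have h2 : Tendsto (fun t => (2:ℝ) ^ (-(w t).re)) l (𝓝 0) := by
      have heq : ∀ t, (2:ℝ) ^ (-(w t).re) = Real.exp (Real.log 2 * (-(w t).re)) := by
        intro t; rw [Real.rpow_def_of_pos (by norm_num)]
      simp only [heq]
      refine Real.tendsto_exp_atBot.comp ?_
      exact Tendsto.const_mul_atBot (by positivity) (tendsto_neg_atBot_iff.mpr hw)
    simpa using h2.const_mul M
  exact squeeze_zero' (Eventually.of_forall fun t => dist_nonneg) hbound hlim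

lemma re_phi_atTop (φ : ℂ → ℂ) (c₀ : ℕ) (b : ℕ → ℂ) (hc : 1 ≤ c₀)
    (hform : ∀ s : ℂ, 1/2 < s.re → φ s = (c₀:ℂ) * s + ∑' n : ℕ, b n * ((n:ℂ)+1) ^ (-s)) :
    Tendsto (fun σ : ℝ => (φ (σ:ℂ)).re) atTop atTop := by
  have hre : ∀ σ : ℝ, ((c₀:ℂ) * (σ:ℂ)).re = (c₀:ℝ) * σ := by
    intro σ; simp [Complex.mul_re]
  by_cases hS : ∃ x₀ : ℝ, Summable (fun n : ℕ => ‖b n‖ * ((n:ℝ)+1) ^ (-x₀))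
  · obtain ⟨x₀, hx₀⟩ := hS
    refine tendsto_atTop_mono' _ ?_ (tendsto_atTop_add_const_right _
      (-(∑' n : ℕ, ‖b n‖ * ((n:ℝ)+1) ^ (-x₀))) tendsto_id)
    filter_upwards [eventually_ge_atTop (max x₀ 1)] with σ hσ
    have hσ1 : (1:ℝ) ≤ σ := le_trans (le_max_right _ _) hσ
    have hσ0 : x₀ ≤ σ := le_trans (le_max_left _ _) hσ
    have hhalf : 1/2 < ((σ:ℂ)).re := by simp; linarith
    rw [hform _ hhalf]
    set T := ∑' n : ℕ, b n * ((n:ℂ)+1) ^ (-(σ:ℂ)) with hT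
    have hnormle : ∀ n : ℕ, ‖b n * ((n:ℂ)+1) ^ (-(σ:ℂ))‖ ≤ ‖b n‖ * ((n:ℝ)+1) ^ (-x₀) := by
      intro n
      rw [norm_mul, nterm_norm]
      have : (((n:ℝ)+1)) ^ (-(σ:ℂ)).re ≤ ((n:ℝ)+1) ^ (-x₀) := by
        refine Real.rpow_le_rpow_of_exponent_le (by simp) ?_
        simp; linarith
      exact mul_le_mul_of_nonneg_left this (norm_nonneg _)
    have hTle : ‖T‖ ≤ ∑' n : ℕ, ‖b n‖ * ((n:ℝ)+1) ^ (-x₀) :=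
      tsum_of_norm_bounded hx₀.hasSum hnormle
    have hTre : -(∑' n : ℕ, ‖b n‖ * ((n:ℝ)+1) ^ (-x₀)) ≤ T.re := by
      have h1 : |T.re| ≤ ‖T‖ := by
        exact Complex.abs_re_le_norm T
      cases' abs_le.1 (le_trans h1 hTle) with h2 h3
      linarith
    rw [Complex.add_re, hre]
    have hcast : (1:ℝ) ≤ (c₀:ℝ) := by exact_mod_cast hc
    simp only [id_eq]
    nlinarith
  · push_neg at hS
    refine tendsto_atTop_mono' _ ?_ tendsto_id
    filter_upwards [eventually_ge_atTop (1:ℝ)] with σ hσ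
    have hhalf : 1/2 < ((σ:ℂ)).re := by simp; linarith
    rw [hform _ hhalf]
    have hns : ¬ Summable (fun n : ℕ => b n * ((n:ℂ)+1) ^ (-(σ:ℂ))) := by
      intro h
      refine hS σ ?_
      refine (summable_norm_iff.mpr h).congr fun n => ?_
      rw [norm_mul, nterm_norm]
      simp
    rw [tsum_eq_zero_of_not_summable hns, add_zero, hre]
    have hcast : (1:ℝ) ≤ (c₀:ℝ) := by exact_mod_cast hc
    simp only [id_eq]
    nlinarith

-- continuity of coordinate evaluation
lemma continuous_eval0 : Continuous (fun x : DirichletH => (x : ∀ _ : ℕ, ℂ) 0) := by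
  have : LipschitzWith 1 (fun x : DirichletH => (x : ∀ _ : ℕ, ℂ) 0) := by
    refine LipschitzWith.of_dist_le_mul fun x y => ?_
    rw [NNReal.coe_one, one_mul, dist_eq_norm, dist_eq_norm]
    have : ((x - y : DirichletH) : ∀ _ : ℕ, ℂ) 0 = (x : ∀ _ : ℕ, ℂ) 0 - (y : ∀ _ : ℕ, ℂ) 0 := by
      rw [lp.coeFn_sub]; rfl
    rw [← this]
    exact lp.norm_apply_le_norm (by norm_num) (x - y) 0
  exact this.continuous

-- not dense if a continuous map is constant on the orbit
lemma not_dense_orbit (f : DirichletH) (Cφ : DirichletH →L[ℂ] DirichletH)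
    (hkey : ∀ a : DirichletH, ((Cφ a : DirichletH) : ∀ _ : ℕ, ℂ) 0 = (a : ∀ _ : ℕ, ℂ) 0) :
    ¬ Dense (Set.range fun n : ℕ => (Cφ ^ (n + 1)) f) := by
  intro hdense
  have horb : ∀ n : ℕ, (((Cφ ^ (n+1)) f : DirichletH) : ∀ _ : ℕ, ℂ) 0 = (f : ∀ _ : ℕ, ℂ) 0 := by
    intro n
    induction n with
    | zero => simpa using hkey f
    | succ k ih =>
        have : (Cφ ^ (k+2)) f = Cφ ((Cφ ^ (k+1)) f) := by
          rw [pow_succ']; rfl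
        rw [this, hkey]; exact ih
  set C : Set DirichletH := (fun x : DirichletH => (x : ∀ _ : ℕ, ℂ) 0) ⁻¹' {(f : ∀ _ : ℕ, ℂ) 0}
  have hC : IsClosed C := IsClosed.preimage continuous_eval0 isClosed_singleton
  have hsub : Set.range (fun n : ℕ => (Cφ ^ (n + 1)) f) ⊆ C := by
    rintro x ⟨n, rfl⟩; exact horb n
  have : (Set.univ : Set DirichletH) ⊆ C := by
    rw [← hdense.closure_eq]
    exact hC.closure_subset_iff.mpr hsub
  have hx : (f + lp.single 2 0 (1:ℂ)) ∈ C := this (Set.mem_univ _)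
  simp only [C, Set.mem_preimage, Set.mem_singleton_iff] at hx
  rw [lp.coeFn_add] at hx
  simp [lp.single_apply] at hx

lemma key_coeff0 (φ : ℂ → ℂ) (Cφ : DirichletH →L[ℂ] DirichletH)
    (hCφ : ∀ (a : DirichletH) (s : ℂ), 1 / 2 < s.re →
      dirichletFun (Cφ a) s = dirichletFun a (φ s))
    (hphi : Tendsto (fun σ : ℝ => (φ (σ:ℂ)).re) atTop atTop)
    (a : DirichletH) :
    ((Cφ a : DirichletH) : ∀ _ : ℕ, ℂ) 0 = (a : ∀ _ : ℕ, ℂ) 0 := by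
  have hre : Tendsto (fun σ : ℝ => ((σ:ℂ)).re) atTop atTop := by
    exact tendsto_id
  have h1 : Tendsto (fun σ : ℝ => dirichletFun (Cφ a) (σ:ℂ)) atTop
      (𝓝 (((Cφ a : DirichletH) : ∀ _ : ℕ, ℂ) 0)) :=
    tendsto_dirichletFun_of_re_atTop (Cφ a) hre
  have h2 : Tendsto (fun σ : ℝ => dirichletFun (Cφ a) (σ:ℂ)) atTop
      (𝓝 ((a : ∀ _ : ℕ, ℂ) 0)) := by
    have h3 : Tendsto (fun σ : ℝ => dirichletFun a (φ (σ:ℂ))) atTop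
        (𝓝 ((a : ∀ _ : ℕ, ℂ) 0)) := tendsto_dirichletFun_of_re_atTop a hphi
    refine Tendsto.congr' ?_ h3
    filter_upwards [eventually_gt_atTop (1/2 : ℝ)] with σ hσ
    exact (hCφ a (σ:ℂ) (by simpa using hσ)).symm
  exact tendsto_nhds_unique h1 h2

lemma nbase_ne_zero (n : ℕ) : ((n:ℂ)+1) ≠ 0 := by
  have : ((n:ℂ)+1) = ((n+1 : ℕ) : ℂ) := by push_cast; ring
  rw [this]
  exact_mod_cast Nat.succ_ne_zero n

lemma unit_norm (n : ℕ) (t : ℝ) : ‖((n:ℂ)+1) ^ (-(t:ℂ)*Complex.I)‖ = 1 := by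
  have h : (-(t:ℂ)*Complex.I) = -((t:ℂ)*Complex.I) := by ring
  rw [h, nterm_norm]
  simp

lemma pigeonhole (N : ℕ) {δ : ℝ} (hδ : 0 < δ) :
    ∃ τ : ℕ, 1 ≤ τ ∧ ∀ n : ℕ, n < N → ‖((n:ℂ)+1) ^ (-(τ:ℂ)*Complex.I) - 1‖ ≤ δ := by
  set Φ : ℕ → (Fin N → ℂ) := fun j => fun n => (((n:ℕ):ℂ)+1) ^ (-((j:ℕ):ℂ)*Complex.I) with hΦ
  have hmem : ∀ j, Φ j ∈ Metric.closedBall (0 : Fin N → ℂ) 1 := by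
    intro j
    rw [Metric.mem_closedBall, dist_zero_right]
    refine (pi_norm_le_iff_of_nonneg zero_le_one).2 fun n => ?_
    rw [hΦ]
    simp only
    rw [show (-((j:ℕ):ℂ)*Complex.I) = (-((j:ℝ):ℂ)*Complex.I) by push_cast; ring]
    exact le_of_eq (unit_norm _ _)
  obtain ⟨x, -, g, hg, hgt⟩ :=
    (isCompact_closedBall (0 : Fin N → ℂ) 1).tendsto_subseq hmem
  rw [Metric.tendsto_atTop] at hgt
  obtain ⟨K, hK⟩ := hgt (δ/2) (by linarith)
  set j₁ := g K with hj₁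
  set j₂ := g (K+1) with hj₂
  have hlt : j₁ < j₂ := hg (Nat.lt_succ_self K)
  have hd : dist (Φ j₂) (Φ j₁) < δ :=
    calc dist (Φ j₂) (Φ j₁) ≤ dist (Φ j₂) x + dist (Φ j₁) x := dist_triangle_right _ _ _
      _ < δ/2 + δ/2 := add_lt_add (hK (K+1) (Nat.le_succ K)) (hK K le_rfl)
      _ = δ := by ring
  refine ⟨j₂ - j₁, by omega, fun n hn => ?_⟩
  set τ := j₂ - j₁ with hτ
  have hsplit : Φ j₂ ⟨n, hn⟩ = Φ j₁ ⟨n, hn⟩ * (((n:ℕ):ℂ)+1) ^ (-(τ:ℂ)*Complex.I) := by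
    rw [hΦ]
    simp only
    rw [← Complex.cpow_add _ _ (nbase_ne_zero n)]
    congr 1
    have : (j₂ : ℂ) = (j₁ : ℂ) + (τ : ℂ) := by
      have : j₁ + τ = j₂ := by omega
      push_cast [← this]; ring
    rw [this]; ring
  have hnorm1 : ‖Φ j₁ ⟨n, hn⟩‖ = 1 := by
    rw [hΦ]
    simp only
    rw [show (-((j₁:ℕ):ℂ)*Complex.I) = (-((j₁:ℝ):ℂ)*Complex.I) by push_cast; ring]
    exact unit_norm _ _
  calc ‖((n:ℂ)+1) ^ (-(τ:ℂ)*Complex.I) - 1‖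
      = ‖Φ j₁ ⟨n, hn⟩‖ * ‖((n:ℂ)+1) ^ (-(τ:ℂ)*Complex.I) - 1‖ := by rw [hnorm1, one_mul]
    _ = ‖Φ j₁ ⟨n, hn⟩ * (((n:ℂ)+1) ^ (-(τ:ℂ)*Complex.I) - 1)‖ := (norm_mul _ _).symm
    _ = ‖Φ j₂ ⟨n, hn⟩ - Φ j₁ ⟨n, hn⟩‖ := by rw [mul_sub, mul_one, ← hsplit]
    _ ≤ dist (Φ j₂) (Φ j₁) := by
        rw [← dist_eq_norm]
        exact dist_le_pi_dist (Φ j₂) (Φ j₁) ⟨n, hn⟩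
    _ ≤ δ := hd.le

variable {b : ℕ → ℂ}

noncomputable def Fb (b : ℕ → ℂ) : ℂ → ℂ := fun s => ∑' n : ℕ, b n * ((n:ℂ)+1) ^ (-s)

lemma summable_bnorm_mono (hsumN : ∀ x : ℝ, 1/2 < x → Summable (fun n : ℕ => ‖b n‖ * ((n:ℝ)+1) ^ (-x)))
    {x y : ℝ} (hx : 1/2 < x) (hxy : x ≤ y) :
    ∀ n : ℕ, ‖b n‖ * ((n:ℝ)+1) ^ (-y) ≤ ‖b n‖ * ((n:ℝ)+1) ^ (-x) := by
  intro n
  refine mul_le_mul_of_nonneg_left ?_ (norm_nonneg _)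
  exact Real.rpow_le_rpow_of_exponent_le (by simp) (by linarith)

lemma summable_bC (hsumN : ∀ x : ℝ, 1/2 < x → Summable (fun n : ℕ => ‖b n‖ * ((n:ℝ)+1) ^ (-x)))
    {s : ℂ} (hs : 1/2 < s.re) :
    Summable (fun n : ℕ => b n * ((n:ℂ)+1) ^ (-s)) := by
  refine Summable.of_norm ?_
  refine (hsumN s.re hs).congr fun n => ?_
  rw [norm_mul, nterm_norm]

lemma Fb_diff (hsumN : ∀ x : ℝ, 1/2 < x → Summable (fun n : ℕ => ‖b n‖ * ((n:ℝ)+1) ^ (-x)))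
    {θ : ℝ} (hθ : 1/2 < θ) :
    DifferentiableOn ℂ (Fb b) {s : ℂ | θ < s.re} := by
  refine differentiableOn_tsum_of_summable_norm (hsumN θ hθ) ?_ (isOpen_lt continuous_const Complex.continuous_re) ?_
  · intro i
    refine (Differentiable.differentiableOn ?_)
    have h1 : Differentiable ℂ (fun w : ℂ => ((i:ℂ)+1) ^ (-w)) :=
      Differentiable.const_cpow (differentiable_id.neg) (Or.inl (nbase_ne_zero i))
    exact h1.const_mul (b i)
  · intro i w hw
    rw [norm_mul, nterm_norm]
    refine mul_le_mul_of_nonneg_left ?_ (norm_nonneg _)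
    exact Real.rpow_le_rpow_of_exponent_le (by simp) (by simp at hw; linarith)

lemma Fb_diffAt (hsumN : ∀ x : ℝ, 1/2 < x → Summable (fun n : ℕ => ‖b n‖ * ((n:ℝ)+1) ^ (-x)))
    {s : ℂ} (hs : 1/2 < s.re) : DifferentiableAt ℂ (Fb b) s := by
  set θ := (1/2 + s.re)/2 with hθ
  have h1 : 1/2 < θ := by simp only [hθ]; linarith
  have h2 : θ < s.re := by simp only [hθ]; linarith
  exact (Fb_diff hsumN h1).differentiableAt
    ((isOpen_lt continuous_const Complex.continuous_re).mem_nhds (by simpa using h2))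

lemma Fb_analytic (hsumN : ∀ x : ℝ, 1/2 < x → Summable (fun n : ℕ => ‖b n‖ * ((n:ℝ)+1) ^ (-x))) :
    AnalyticOnNhd ℂ (Fb b) {s : ℂ | 1/2 < s.re} := by
  intro s hs
  set θ := (1/2 + s.re)/2 with hθ
  have h1 : (1:ℝ)/2 < θ := by simp only [hθ]; simp at hs; linarith
  have h2 : θ < s.re := by simp only [hθ]; simp at hs; linarith
  exact (Fb_diff hsumN h1).analyticAt
    ((isOpen_lt continuous_const Complex.continuous_re).mem_nhds (by simpa using h2))

lemma diff_est (hsumN : ∀ x : ℝ, 1/2 < x → Summable (fun n : ℕ => ‖b n‖ * ((n:ℝ)+1) ^ (-x)))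
    {xm : ℝ} (hxm : 1/2 < xm) {ρ : ℝ} (hρ : 0 < ρ) :
    ∃ τ : ℕ, 1 ≤ τ ∧ ∀ s : ℂ, 1/2 < s.re → xm ≤ s.re →
      ‖Fb b (s + (τ:ℂ)*Complex.I) - Fb b s‖ ≤ ρ := by
  set G : ℕ → ℝ := fun n => ‖b n‖ * ((n:ℝ)+1) ^ (-xm) with hG
  have hGsum : Summable G := hsumN xm hxm
  have htail := tendsto_sum_nat_add G
  obtain ⟨N, hN⟩ := (htail.eventually (eventually_le_nhds (show (0:ℝ) < ρ/4 by linarith))).exists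
  set S := ∑ n ∈ Finset.range N, G n with hS
  have hSnn : 0 ≤ S := Finset.sum_nonneg fun n _ => by positivity
  set δ := ρ/(2*(S+1)) with hδ
  have hδpos : 0 < δ := by positivity
  obtain ⟨τ, hτ1, hτ⟩ := pigeonhole N hδpos
  refine ⟨τ, hτ1, fun s hs hsxm => ?_⟩
  have hres : (s + (τ:ℂ)*Complex.I).re = s.re := by simp
  have hsum1 : Summable (fun n : ℕ => b n * ((n:ℂ)+1) ^ (-(s + (τ:ℂ)*Complex.I))) :=
    summable_bC hsumN (by rw [hres]; exact hs)
  have hsum2 : Summable (fun n : ℕ => b n * ((n:ℂ)+1) ^ (-s)) := summable_bC hsumN hs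
  set e : ℕ → ℂ := fun n => b n * ((n:ℂ)+1) ^ (-s) * (((n:ℂ)+1) ^ (-(τ:ℂ)*Complex.I) - 1) with he
  have hdiff : Fb b (s + (τ:ℂ)*Complex.I) - Fb b s = ∑' n, e n := by
    rw [Fb, Fb, ← hsum1.tsum_sub hsum2]
    refine tsum_congr fun n => ?_
    have hsplit : ((n:ℂ)+1) ^ (-(s + (τ:ℂ)*Complex.I)) =
        ((n:ℂ)+1) ^ (-s) * ((n:ℂ)+1) ^ (-(τ:ℂ)*Complex.I) := by
      rw [← Complex.cpow_add _ _ (nbase_ne_zero n)]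
      ring_nf
    rw [hsplit, he]; ring
  set u : ℕ → ℝ := fun n => if n < N then G n * δ else 2 * G n with hu
  have hub : ∀ n, ‖e n‖ ≤ u n := by
    intro n
    have hterm : ‖b n * ((n:ℂ)+1) ^ (-s)‖ ≤ G n := by
      rw [norm_mul, nterm_norm, hG]
      refine mul_le_mul_of_nonneg_left ?_ (norm_nonneg _)
      exact Real.rpow_le_rpow_of_exponent_le (by simp) (by linarith)
    have hGnn : (0:ℝ) ≤ G n := by rw [hG]; positivity
    rw [he]
    simp only
    rw [norm_mul]
    by_cases hn : n < N
    · rw [hu]; simp only [hn, if_true]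
      exact mul_le_mul hterm (hτ n hn) (norm_nonneg _) hGnn
    · rw [hu]; simp only [hn, if_false]
      have h2 : ‖((n:ℂ)+1) ^ (-(τ:ℂ)*Complex.I) - 1‖ ≤ 2 := by
        refine le_trans (norm_sub_le _ _) ?_
        have : ‖((n:ℂ)+1) ^ (-(τ:ℂ)*Complex.I)‖ = 1 := by
          rw [show (-(τ:ℂ)*Complex.I) = -((τ:ℂ)*Complex.I) by ring, nterm_norm]
          simp
        rw [this]; norm_num
      calc ‖b n * ((n:ℂ)+1) ^ (-s)‖ * ‖((n:ℂ)+1) ^ (-(τ:ℂ)*Complex.I) - 1‖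
          ≤ G n * 2 := mul_le_mul hterm h2 (norm_nonneg _) hGnn
        _ = 2 * G n := by ring
  have husum : Summable u := by
    refine Summable.of_nonneg_of_le (fun n => ?_) (fun n => ?_) (hGsum.mul_left (δ + 2))
    · rw [hu]; dsimp only; split
      · positivity
      · have : (0:ℝ) ≤ G n := by rw [hG]; positivity
        linarith
    · rw [hu]; dsimp only
      have hGnn : (0:ℝ) ≤ G n := by rw [hG]; positivity
      split
      · nlinarith
      · nlinarith
  calc ‖Fb b (s + (τ:ℂ)*Complex.I) - Fb b s‖ = ‖∑' n, e n‖ := by rw [hdiff]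
    _ ≤ ∑' n, u n := tsum_of_norm_bounded husum.hasSum hub
    _ = (∑ n ∈ Finset.range N, u n) + ∑' n, u (n + N) := (husum.sum_add_tsum_nat_add N).symm
    _ ≤ S * δ + 2 * (ρ/4) := by
        refine add_le_add ?_ ?_
        · rw [hS, Finset.sum_mul]
          refine le_of_eq (Finset.sum_congr rfl fun n hn => ?_)
          rw [hu]; simp only [Finset.mem_range] at hn; simp [hn]
        · have hcong : ∀ n : ℕ, u (n + N) = 2 * G (n + N) := by
            intro n; rw [hu]; simp only; rw [if_neg (by omega)]
          calc ∑' n, u (n + N) = ∑' n, 2 * G (n + N) := tsum_congr hcong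
            _ = 2 * ∑' n, G (n + N) := tsum_mul_left
            _ ≤ 2 * (ρ/4) := by
                refine mul_le_mul_of_nonneg_left hN (by norm_num)
    _ ≤ ρ := by
        have hδ2 : (S+1) * δ = ρ/2 := by
          rw [hδ]; field_simp
        nlinarith

lemma exists_collision
    (hsumN : ∀ x : ℝ, 1/2 < x → Summable (fun n : ℕ => ‖b n‖ * ((n:ℝ)+1) ^ (-x)))
    {p q : ℂ} (hp : 1/2 < p.re) (hq : 1/2 < q.re) (hne : Fb b p ≠ Fb b q) :
    ∃ s₁ s₂ : ℂ, 1/2 < s₁.re ∧ 1/2 < s₂.re ∧ s₁ ≠ s₂ ∧ Fb b s₁ = Fb b s₂ := by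
  have hana : AnalyticAt ℂ (fun z => Fb b z - Fb b p) p :=
    ((Fb_analytic hsumN) p hp).sub analyticAt_const
  rcases hana.eventually_eq_zero_or_eventually_ne_zero with hcase | hcase
  · -- F is locally constant: identity theorem gives F q = F p, contradiction
    exfalso
    have heq : (Fb b) =ᶠ[𝓝 p] (fun _ => Fb b p) := by
      filter_upwards [hcase] with z hz
      exact sub_eq_zero.mp hz
    have hEq := AnalyticOnNhd.eqOn_of_preconnected_of_eventuallyEq
      (Fb_analytic hsumN) (analyticOnNhd_const)
      ((convex_halfSpace_re_gt (1/2)).isPreconnected) hp heq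
    exact hne (by rw [hEq hp, hEq hq])
  · -- isolated: get a punctured ball where F z ≠ F p
    rw [eventually_nhdsWithin_iff] at hcase
    rw [Metric.eventually_nhds_iff] at hcase
    obtain ⟨ε, hε, hball⟩ := hcase
    set r := min (ε/2) (min (1/8) ((p.re - 1/2)/4)) with hr
    have hrpos : 0 < r := by
      refine lt_min (by linarith) (lt_min (by norm_num) (by linarith))
    have hrε : r < ε := lt_of_le_of_lt (min_le_left _ _) (by linarith)
    have hr8 : r ≤ 1/8 := le_trans (min_le_right _ _) (min_le_left _ _)
    have hrp : r ≤ (p.re - 1/2)/4 := le_trans (min_le_right _ _) (min_le_right _ _)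
    set xm := p.re - r with hxm
    have hxm2 : 1/2 < xm := by rw [hxm]; linarith
    have hre_ball : ∀ z : ℂ, z ∈ Metric.closedBall p r → xm ≤ z.re ∧ 1/2 < z.re := by
      intro z hz
      rw [Metric.mem_closedBall, Complex.dist_eq] at hz
      have := Complex.abs_re_le_norm (z - p)
      rw [Complex.sub_re] at this
      have h1 : |z.re - p.re| ≤ r := le_trans this hz
      rw [abs_le] at h1
      constructor
      · rw [hxm]; linarith [h1.1]
      · linarith [h1.1]
    -- minimum of ‖F z - F p‖ on the sphere
    have hcont : ContinuousOn (fun z => ‖Fb b z - Fb b p‖) (Metric.sphere p r) := by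
      refine ContinuousOn.norm ?_
      refine ContinuousOn.sub ?_ continuousOn_const
      intro z hz
      have hz' : z ∈ Metric.closedBall p r := Metric.sphere_subset_closedBall hz
      exact ((Fb_diffAt hsumN (hre_ball z hz').2).continuousAt).continuousWithinAt
    obtain ⟨z₀, hz₀, hmin⟩ := (isCompact_sphere p r).exists_isMinOn
      (NormedSpace.sphere_nonempty.mpr hrpos.le) hcont
    set ρ := ‖Fb b z₀ - Fb b p‖ with hρ
    have hρpos : 0 < ρ := by
      rw [hρ, norm_pos_iff]
      rw [mem_sphere_iff_norm] at hz₀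
      refine hball ?_ ?_
      · rw [Complex.dist_eq, hz₀]
        exact hrε
      · simp only [Set.mem_compl_iff, Set.mem_singleton_iff]
        intro hzp
        rw [hzp, sub_self, norm_zero] at hz₀
        exact hrpos.ne' hz₀.symm
    -- uniform vertical-translation estimate
    obtain ⟨τ, hτ1, hest⟩ := diff_est hsumN hxm2 (show (0:ℝ) < ρ/4 by linarith)
    by_cases hzero : Fb b (p + (τ:ℂ)*Complex.I) = Fb b p
    · refine ⟨p + (τ:ℂ)*Complex.I, p, by simpa using hp, hp, ?_, hzero⟩
      intro hcontra
      have him : (p + (τ:ℂ)*Complex.I).im = p.im + τ := by simp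
      have := congrArg Complex.im hcontra
      rw [him] at this
      have hτpos : (0:ℝ) < τ := by exact_mod_cast hτ1
      linarith
    · -- find a zero of h(s) = F(s+iτ) - F p in the closed ball via max modulus
      have hzero' : ∃ s' ∈ Metric.closedBall p r, Fb b (s' + (τ:ℂ)*Complex.I) = Fb b p := by
        by_contra hno
        push_neg at hno
        set h : ℂ → ℂ := fun s => Fb b (s + (τ:ℂ)*Complex.I) - Fb b p with hh
        have hno' : ∀ s ∈ Metric.closedBall p r, h s ≠ 0 := by
          intro s hs
          rw [hh]
          exact sub_ne_zero.mpr (hno s hs)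
        have hhd : ∀ s ∈ Metric.closedBall p r, DifferentiableAt ℂ h s := by
          intro s hs
          refine DifferentiableAt.sub_const ?_ _
          have h1 : DifferentiableAt ℂ (Fb b) (s + (τ:ℂ)*Complex.I) := by
            refine Fb_diffAt hsumN ?_
            have : (s + (τ:ℂ)*Complex.I).re = s.re := by simp
            rw [this]; exact (hre_ball s hs).2
          exact h1.comp s ((differentiableAt_id.add_const _))
        set H : ℂ → ℂ := fun s => (h s)⁻¹ with hH
        have hHdc : DiffContOnCl ℂ H (Metric.ball p r) := by
          constructor
          · refine DifferentiableOn.inv ?_ ?_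
            · intro s hs
              exact (hhd s (Metric.ball_subset_closedBall hs)).differentiableWithinAt
            · intro s hs
              exact hno' s (Metric.ball_subset_closedBall hs)
          · rw [closure_ball p hrpos.ne']
            refine ContinuousOn.inv₀ ?_ ?_
            · intro s hs
              exact ((hhd s hs).continuousAt).continuousWithinAt
            · exact hno'
        have hfr : ∀ z ∈ frontier (Metric.ball p r), ‖H z‖ ≤ (ρ*(3/4))⁻¹ := by
          intro z hz
          rw [frontier_ball p hrpos.ne'] at hz
          have hzc : z ∈ Metric.closedBall p r := Metric.sphere_subset_closedBall hz
          have h1 : ρ ≤ ‖Fb b z - Fb b p‖ := hmin hz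
          have h2 : ‖Fb b (z + (τ:ℂ)*Complex.I) - Fb b z‖ ≤ ρ/4 :=
            hest z (hre_ball z hzc).2 (hre_ball z hzc).1
          have h3 : ρ*(3/4) ≤ ‖h z‖ := by
            have hdecomp : Fb b z - Fb b p = h z - (Fb b (z + (τ:ℂ)*Complex.I) - Fb b z) := by
              rw [hh]; ring
            have := norm_sub_le (h z) (Fb b (z + (τ:ℂ)*Complex.I) - Fb b z)
            rw [← hdecomp] at this
            linarith
          rw [hH]
          simp only [norm_inv]
          refine inv_anti₀ (by linarith) h3
        have hmax := Complex.norm_le_of_forall_mem_frontier_norm_le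
          Metric.isBounded_ball hHdc hfr
          (by rw [closure_ball p hrpos.ne']; exact Metric.mem_closedBall_self hrpos.le)
        have hp4 : ‖h p‖ ≤ ρ/4 := by
          rw [hh]
          exact hest p hp (by rw [hxm]; linarith)
        have hppos : 0 < ‖h p‖ := norm_pos_iff.mpr (hno' p (Metric.mem_closedBall_self hrpos.le))
        rw [hH] at hmax
        simp only [norm_inv] at hmax
        have h5 : ρ*(3/4) ≤ ‖h p‖ := by
          have h6 : (0:ℝ) < ρ*(3/4) := by linarith
          have := (inv_le_inv₀ (by positivity) h6).mp hmax
          linarith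
        linarith
      obtain ⟨s', hs', hFeq⟩ := hzero'
      refine ⟨s' + (τ:ℂ)*Complex.I, p, ?_, hp, ?_, hFeq⟩
      · have : (s' + (τ:ℂ)*Complex.I).re = s'.re := by simp
        rw [this]; exact (hre_ball s' hs').2
      · intro hcontra
        have := congrArg Complex.im hcontra
        simp only [Complex.add_im] at this
        have him : ((τ:ℂ)*Complex.I).im = (τ:ℝ) := by simp
        rw [him] at this
        have hτpos : (1:ℝ) ≤ τ := by exact_mod_cast hτ1
        rw [Metric.mem_closedBall, Complex.dist_eq] at hs'
        have h6 := Complex.abs_im_le_norm (s' - p)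
        rw [Complex.sub_im] at h6
        have h7 : |s'.im - p.im| ≤ r := le_trans h6 hs'
        rw [abs_le] at h7
        linarith [h7.1]

lemma exists_coord_ne {s₁ s₂ : ℂ} (hne : s₁ ≠ s₂) :
    ∃ n : ℕ, ((n:ℂ)+1) ^ (-s₁) ≠ ((n:ℂ)+1) ^ (-s₂) := by
  by_contra hcon
  push_neg at hcon
  have h2 : (2:ℂ) ^ (-s₁) = (2:ℂ) ^ (-s₂) := by
    have := hcon 1; norm_num at this; exact_mod_cast this
  have h3 : (3:ℂ) ^ (-s₁) = (3:ℂ) ^ (-s₂) := by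
    have := hcon 2; norm_num at this; exact_mod_cast this
  have hlog2 : Complex.log 2 = (Real.log 2 : ℂ) := by
    rw [show (2:ℂ) = ((2:ℝ):ℂ) by norm_num, Complex.ofReal_log (by norm_num)]
  have hlog3 : Complex.log 3 = (Real.log 3 : ℂ) := by
    rw [show (3:ℂ) = ((3:ℝ):ℂ) by norm_num, Complex.ofReal_log (by norm_num)]
  have key : ∀ (c : ℂ), c ≠ 0 → c ^ (-s₁) = c ^ (-s₂) →
      ∃ k : ℤ, Complex.log c * (s₂ - s₁) = k * (2 * Real.pi * Complex.I) := by
    intro c hc heq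
    rw [Complex.cpow_def_of_ne_zero hc, Complex.cpow_def_of_ne_zero hc,
      Complex.exp_eq_exp_iff_exists_int] at heq
    obtain ⟨k, hk⟩ := heq
    refine ⟨k, ?_⟩
    have : Complex.log c * (s₂ - s₁) = Complex.log c * (-s₁) - Complex.log c * (-s₂) := by ring
    rw [this, hk]; push_cast; ring
  obtain ⟨k, hk⟩ := key 2 (by norm_num) h2
  obtain ⟨m, hm⟩ := key 3 (by norm_num) h3
  have hw : s₂ - s₁ ≠ 0 := sub_ne_zero.mpr (Ne.symm hne)
  have hl2 : Complex.log 2 ≠ 0 := by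
    rw [hlog2]
    simp only [ne_eq, Complex.ofReal_eq_zero]
    exact Real.log_ne_zero_of_pos_of_ne_one (by norm_num) (by norm_num)
  have hl3 : Complex.log 3 ≠ 0 := by
    rw [hlog3]
    simp only [ne_eq, Complex.ofReal_eq_zero]
    exact Real.log_ne_zero_of_pos_of_ne_one (by norm_num) (by norm_num)
  have hc0 : (2 * Real.pi * Complex.I : ℂ) ≠ 0 := by
    simp [Real.pi_ne_zero, Complex.I_ne_zero]
  have hk0 : k ≠ 0 := by
    intro h; rw [h] at hk; simp at hk
    rcases hk with h | h
    · exact hl2 h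
    · exact hw h
  have hm0 : m ≠ 0 := by
    intro h; rw [h] at hm; simp at hm
    rcases hm with h | h
    · exact hl3 h
    · exact hw h
  -- cross-multiply: k * log 3 = m * log 2 (as reals)
  have hcross : (k:ℂ) * Complex.log 3 = (m:ℂ) * Complex.log 2 := by
    have h1 : Complex.log 2 * (Complex.log 3 * (s₂ - s₁)) = Complex.log 2 * ((m:ℂ) * (2 * Real.pi * Complex.I)) := by rw [hm]
    have h2' : Complex.log 3 * (Complex.log 2 * (s₂ - s₁)) = Complex.log 3 * ((k:ℂ) * (2 * Real.pi * Complex.I)) := by rw [hk]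
    have h3' : Complex.log 2 * ((m:ℂ) * (2 * Real.pi * Complex.I)) =
        Complex.log 3 * ((k:ℂ) * (2 * Real.pi * Complex.I)) := by
      rw [← h1, ← h2']; ring
    have h4 : (Complex.log 2 * (m:ℂ)) * (2 * Real.pi * Complex.I) =
        (Complex.log 3 * (k:ℂ)) * (2 * Real.pi * Complex.I) := by linear_combination h3'
    have h5 := mul_right_cancel₀ hc0 h4
    linear_combination (-1 : ℂ) * h5
  rw [hlog2, hlog3] at hcross
  have hcrossR : (k:ℝ) * Real.log 3 = (m:ℝ) * Real.log 2 := by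
    exact_mod_cast hcross
  -- pass to natAbs
  have habs : (k.natAbs : ℝ) * Real.log 3 = (m.natAbs : ℝ) * Real.log 2 := by
    have h1 : |(k:ℝ) * Real.log 3| = |(m:ℝ) * Real.log 2| := by rw [hcrossR]
    rw [abs_mul, abs_mul, abs_of_pos (Real.log_pos (by norm_num)),
      abs_of_pos (Real.log_pos (by norm_num))] at h1
    rw [Nat.cast_natAbs, Nat.cast_natAbs]
    push_cast
    exact h1
  have hKpos : 1 ≤ k.natAbs := Int.natAbs_pos.mpr hk0
  have hMpos : 1 ≤ m.natAbs := Int.natAbs_pos.mpr hm0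
  have hlogpow : Real.log ((3:ℝ) ^ k.natAbs) = Real.log ((2:ℝ) ^ m.natAbs) := by
    rw [Real.log_pow, Real.log_pow]
    exact_mod_cast habs
  have hpow : (3:ℝ) ^ k.natAbs = (2:ℝ) ^ m.natAbs := by
    have h1 : (0:ℝ) < 3 ^ k.natAbs := by positivity
    have h2' : (0:ℝ) < 2 ^ m.natAbs := by positivity
    have := congrArg Real.exp hlogpow
    rwa [Real.exp_log h1, Real.exp_log h2'] at this
  have hnat : (3:ℕ) ^ k.natAbs = 2 ^ m.natAbs := by
    exact_mod_cast hpow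
  have hdvd : 2 ∣ 3 ^ k.natAbs := by
    rw [hnat]
    exact dvd_pow_self 2 (by omega)
  have := Nat.Prime.dvd_of_dvd_pow Nat.prime_two hdvd
  omega

lemma not_dense_orbit2 (f : DirichletH) (Cφ : DirichletH →L[ℂ] DirichletH)
    (y : DirichletH) (hy : y ≠ 0) (horth : ∀ a : DirichletH, ⟪y, Cφ a⟫ = 0) :
    ¬ Dense (Set.range fun n : ℕ => (Cφ ^ (n + 1)) f) := by
  intro hdense
  set L : DirichletH →L[ℂ] ℂ := innerSL ℂ y with hL
  set C : Set DirichletH := L ⁻¹' {0} with hC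
  have hCclosed : IsClosed C := IsClosed.preimage L.continuous isClosed_singleton
  have hsub : Set.range (fun n : ℕ => (Cφ ^ (n + 1)) f) ⊆ C := by
    rintro x ⟨n, rfl⟩
    have : (Cφ ^ (n+1)) f = Cφ ((Cφ ^ n) f) := by rw [pow_succ']; rfl
    simp only [hC, Set.mem_preimage, Set.mem_singleton_iff, hL]
    rw [this]
    exact horth _
  have huniv : (Set.univ : Set DirichletH) ⊆ C := by
    rw [← hdense.closure_eq]
    exact hCclosed.closure_subset_iff.mpr hsub
  have hyC := huniv (Set.mem_univ y)
  simp only [hC, Set.mem_preimage, Set.mem_singleton_iff, hL] at hyC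
  rw [innerSL_apply_apply, inner_self_eq_zero] at hyC
  exact hy hyC


lemma b_summable {φ : ℂ → ℂ} {b : ℕ → ℂ}
    (hφ_maps : ∀ s : ℂ, 1 / 2 < s.re → 1 / 2 < (φ s).re)
    (hform0 : ∀ s : ℂ, 1/2 < s.re → φ s = Fb b s) :
    ∀ x : ℝ, 1/2 < x → Summable (fun n : ℕ => ‖b n‖ * ((n:ℝ)+1) ^ (-x)) := by
  intro x hx
  by_contra hns
  have hxre : 1/2 < ((x:ℂ)).re := by simpa using hx
  have hnsC : ¬ Summable (fun n : ℕ => b n * ((n:ℂ)+1) ^ (-(x:ℂ))) := by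
    intro h
    refine hns ?_
    refine (summable_norm_iff.mpr h).congr fun n => ?_
    rw [norm_mul, nterm_norm]
    simp
  have h0 : Fb b (x:ℂ) = 0 := by
    rw [Fb]
    exact tsum_eq_zero_of_not_summable hnsC
  have hmaps := hφ_maps (x:ℂ) hxre
  rw [hform0 _ hxre, h0] at hmaps
  norm_num at hmaps

end Auxiliary

set_option maxHeartbeats 1000000

/-- no hypercyclic composition operator on `𝓗`.
Let `φ` map the half-plane `ℂ_{1/2}` into itself and suppose the composition operator
`C_φ(f) = f ∘ φ` maps `𝓗` boundedly into itself; by the Gordon–Hedenmalm theorem, `φ` has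
the form `φ(s) = c₀ s + ψ(s)` with `c₀` a nonnegative integer and `ψ` a Dirichlet series.
Then `C_φ` is not hypercyclic on `𝓗`: no `f ∈ 𝓗` has dense orbit `{C_φⁿ f : n ≥ 1}`. -/
theorem no_hypercyclic_composition_on_dirichlet_space
    (φ : ℂ → ℂ)
    (hφ_maps : ∀ s : ℂ, 1 / 2 < s.re → 1 / 2 < (φ s).re)
    (Cφ : DirichletH →L[ℂ] DirichletH)
    (hCφ : ∀ (a : DirichletH) (s : ℂ), 1 / 2 < s.re →
      dirichletFun (Cφ a) s = dirichletFun a (φ s))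
    (hφ_form : ∃ (c₀ : ℕ) (b : ℕ → ℂ), ∀ s : ℂ, 1 / 2 < s.re →
      φ s = (c₀ : ℂ) * s + ∑' n : ℕ, b n * ((n : ℂ) + 1) ^ (-s)) :
    ¬ ∃ f : DirichletH, Dense (Set.range fun n : ℕ => (Cφ ^ (n + 1)) f) := by
  rintro ⟨f, hdense⟩
  obtain ⟨c₀, b, hform⟩ := hφ_form
  rcases Nat.eq_zero_or_pos c₀ with hc0 | hc0
  · -- the case c₀ = 0 : the symbol φ = ψ is a Dirichlet series, which is (almost) periodic
    -- in the vertical direction, hence not injective; a collision φ s₁ = φ s₂ makes the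
    -- range of Cφ annihilate the difference of reproducing kernels.
    subst hc0
    have hform0 : ∀ s : ℂ, 1/2 < s.re → φ s = Fb b s := by
      intro s hs
      rw [hform s hs]
      simp [Fb]
    have hsumN := b_summable hφ_maps hform0
    have hcol : ∃ s₁ s₂ : ℂ, 1/2 < s₁.re ∧ 1/2 < s₂.re ∧ s₁ ≠ s₂ ∧ Fb b s₁ = Fb b s₂ := by
      by_cases hconst : ∃ p q : ℂ, 1/2 < p.re ∧ 1/2 < q.re ∧ Fb b p ≠ Fb b q
      · obtain ⟨p, q, hp, hq, hne⟩ := hconst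
        exact exists_collision hsumN hp hq hne
      · push_neg at hconst
        refine ⟨1, 2, ?_, ?_, by norm_num, hconst 1 2 ?_ ?_⟩ <;> norm_num
    obtain ⟨s₁, s₂, hs₁, hs₂, hneq, hFeq⟩ := hcol
    have hφeq : φ s₁ = φ s₂ := by rw [hform0 _ hs₁, hform0 _ hs₂, hFeq]
    set y : DirichletH := kvec hs₁ - kvec hs₂ with hy'
    have hy : y ≠ 0 := by
      obtain ⟨n, hn⟩ := exists_coord_ne hneq
      intro h0
      apply hn
      have hcoord : (y : ∀ _ : ℕ, ℂ) n = 0 := by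
        rw [h0, lp.coeFn_zero]
        rfl
      rw [hy', lp.coeFn_sub, Pi.sub_apply] at hcoord
      rw [kvec_apply hs₁, kvec_apply hs₂] at hcoord
      have h1 := sub_eq_zero.mp hcoord
      have h2 := congrArg (starRingEnd ℂ) h1
      rwa [Complex.conj_conj, Complex.conj_conj] at h2
    have horth : ∀ a : DirichletH, @inner ℂ _ _ y (Cφ a) = 0 := by
      intro a
      rw [hy', inner_sub_left, ← dirichletFun_eq_inner _ hs₁, ← dirichletFun_eq_inner _ hs₂,
        hCφ a s₁ hs₁, hCφ a s₂ hs₂, hφeq, sub_self]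
    exact not_dense_orbit2 f Cφ y hy horth hdense
  · -- the case c₀ ≥ 1 : Re φ(σ) → ∞ along the reals, so composition preserves the constant
    -- coefficient, and the whole orbit lies in a proper closed affine subspace.
    have hphi := re_phi_atTop φ c₀ b hc0 hform
    exact not_dense_orbit f Cφ (key_coeff0 φ Cφ hCφ hphi) hdense
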